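/- arXiv:0804.3586 — 3 statements merged into one kernel-verified Lean document; each statement's English description precedes it below -/
import Mathlib

section
/- Let x ∈ ℝ and suppose that for every M ≥ M₀ there exist integers k(M) and ℓ(M) with 1 ≤ ℓ(M) ≤ M and |x − k(M)/ℓ(M)| ≤ 2M^{−4}. Then for all sufficiently large M₁, the rationals k(M₁)/ℓ(M₁) and k(M₁²)/ℓ(M₁²) are equal; consequently x is rational, equal to k(M₁)/ℓ(M₁). -/
lemma gap_lemma (k₁ k₂ : ℤ) (ℓ₁ ℓ₂ : ℕ) (h₁ : 1 ≤ ℓ₁) (h₂ : 1 ≤ ℓ₂)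
    (hne : (k₁ : ℝ) / ℓ₁ ≠ (k₂ : ℝ) / ℓ₂) :
    1 / ((ℓ₁ : ℝ) * ℓ₂) ≤ |(k₁ : ℝ) / ℓ₁ - (k₂ : ℝ) / ℓ₂| := by
  have hl₁ : (0:ℝ) < ℓ₁ := by exact_mod_cast h₁
  have hl₂ : (0:ℝ) < ℓ₂ := by exact_mod_cast h₂
  have hd : k₁ * (ℓ₂:ℤ) - k₂ * (ℓ₁:ℤ) ≠ 0 := by
    intro h0
    apply hne
    have : (k₁:ℝ) * ℓ₂ = (k₂:ℝ) * ℓ₁ := by exact_mod_cast sub_eq_zero.mp h0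
    field_simp
    linarith
  have h1 : (1:ℝ) ≤ |((k₁ * (ℓ₂:ℤ) - k₂ * (ℓ₁:ℤ) : ℤ) : ℝ)| := by
    rw [← Int.cast_abs]
    exact_mod_cast Int.one_le_abs hd
  have heq : |(k₁ : ℝ) / ℓ₁ - (k₂ : ℝ) / ℓ₂| =
      |((k₁ * (ℓ₂:ℤ) - k₂ * (ℓ₁:ℤ) : ℤ) : ℝ)| / ((ℓ₁:ℝ) * ℓ₂) := by
    push_cast
    rw [div_sub_div _ _ (ne_of_gt hl₁) (ne_of_gt hl₂), abs_div,
      abs_of_pos (show (0:ℝ) < ℓ₁ * ℓ₂ by positivity)]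
    ring_nf
  rw [heq]
  gcongr

theorem stmt5 (x : ℝ) (M₀ : ℕ) (k : ℕ → ℤ) (ℓ : ℕ → ℕ)
    (h : ∀ M : ℕ, M₀ ≤ M → 1 ≤ ℓ M ∧ ℓ M ≤ M ∧
      |x - (k M : ℝ) / (ℓ M : ℝ)| ≤ 2 / (M : ℝ) ^ 4) :
    ∃ M' : ℕ, ∀ M₁ : ℕ, M' ≤ M₁ →
      (k M₁ : ℝ) / (ℓ M₁ : ℝ) = (k (M₁ ^ 2) : ℝ) / (ℓ (M₁ ^ 2) : ℝ) ∧
      x = (k M₁ : ℝ) / (ℓ M₁ : ℝ) := by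
  refine ⟨max M₀ 5, ?_⟩
  have key : ∀ M₁ : ℕ, max M₀ 5 ≤ M₁ →
      (k M₁ : ℝ) / (ℓ M₁ : ℝ) = (k (M₁ ^ 2) : ℝ) / (ℓ (M₁ ^ 2) : ℝ) := by
    intro M₁ hM₁
    have h5 : 5 ≤ M₁ := le_trans (le_max_right _ _) hM₁
    have hM0 : M₀ ≤ M₁ := le_trans (le_max_left _ _) hM₁
    obtain ⟨ha1, ha2, ha3⟩ := h M₁ hM0
    obtain ⟨hb1, hb2, hb3⟩ := h (M₁ ^ 2) (le_trans hM0 (Nat.le_self_pow two_ne_zero M₁))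
    by_contra hne
    have hgap := gap_lemma (k M₁) (k (M₁ ^ 2)) (ℓ M₁) (ℓ (M₁ ^ 2)) ha1 hb1 hne
    have hMR : (5:ℝ) ≤ (M₁:ℝ) := by exact_mod_cast h5
    have hl1 : (ℓ M₁ : ℝ) ≤ (M₁:ℝ) := by exact_mod_cast ha2
    have hl2 : (ℓ (M₁^2) : ℝ) ≤ (M₁:ℝ)^2 := by exact_mod_cast hb2
    have hl1p : (0:ℝ) < ℓ M₁ := by exact_mod_cast ha1
    have hl2p : (0:ℝ) < ℓ (M₁^2) := by exact_mod_cast hb1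
    have htri : |(k M₁ : ℝ) / (ℓ M₁ : ℝ) - (k (M₁ ^ 2) : ℝ) / (ℓ (M₁ ^ 2) : ℝ)| ≤
        2 / (M₁:ℝ)^4 + 2 / ((M₁^2 : ℕ):ℝ)^4 := by
      have t := abs_sub_le ((k M₁ : ℝ) / (ℓ M₁ : ℝ)) x ((k (M₁ ^ 2) : ℝ) / (ℓ (M₁ ^ 2) : ℝ))
      rw [abs_sub_comm _ x] at t
      exact t.trans (add_le_add ha3 hb3)
    have hcast : ((M₁^2 : ℕ):ℝ) = (M₁:ℝ)^2 := by push_cast; ring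
    rw [hcast] at htri
    have hlow : 1 / ((M₁:ℝ) * (M₁:ℝ)^2) ≤ 1 / ((ℓ M₁ : ℝ) * (ℓ (M₁^2) : ℝ)) := by
      apply one_div_le_one_div_of_le (by positivity)
      exact mul_le_mul hl1 hl2 (le_of_lt hl2p) (by positivity)
    have hMpos : (0:ℝ) < M₁ := by linarith
    have hc : 1 / ((M₁:ℝ) * (M₁:ℝ)^2) ≤ 2 / (M₁:ℝ)^4 + 2 / ((M₁:ℝ)^2)^4 :=
      le_trans hlow (hgap.trans htri)
    rw [div_add_div _ _ (by positivity) (by positivity),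
      div_le_div_iff₀ (by positivity) (by positivity)] at hc
    have h4 : (625:ℝ) ≤ (M₁:ℝ)^4 := by
      calc (625:ℝ) = 5^4 := by norm_num
        _ ≤ (M₁:ℝ)^4 := pow_le_pow_left₀ (by norm_num) hMR 4
    ring_nf at hc
    nlinarith [pow_pos hMpos 7, pow_pos hMpos 11,
      mul_le_mul_of_nonneg_left hMR (pow_pos hMpos 11).le,
      mul_le_mul_of_nonneg_left h4 (pow_pos hMpos 7).le]
  intro M₁ hM₁
  refine ⟨key M₁ hM₁, ?_⟩
  have h5 : 5 ≤ M₁ := le_trans (le_max_right _ _) hM₁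
  have hpowge : ∀ n : ℕ, max M₀ 5 ≤ M₁ ^ 2 ^ n := fun n =>
    le_trans hM₁ (Nat.le_self_pow (Nat.pos_of_ne_zero (pow_ne_zero n two_ne_zero)).ne' M₁)
  have iter : ∀ n : ℕ, (k M₁ : ℝ) / (ℓ M₁ : ℝ) =
      (k (M₁ ^ 2 ^ n) : ℝ) / (ℓ (M₁ ^ 2 ^ n) : ℝ) := by
    intro n
    induction n with
    | zero => simp
    | succ n ih =>
      rw [ih, key (M₁ ^ 2 ^ n) (hpowge n)]
      congr 2 <;> rw [← pow_mul, ← pow_succ]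
  have hbound : ∀ n : ℕ, |x - (k M₁ : ℝ) / (ℓ M₁ : ℝ)| ≤ 2 / (2:ℝ) ^ n := by
    intro n
    rw [iter n]
    have hM0 : M₀ ≤ M₁ ^ 2 ^ n := le_trans (le_max_left _ _) (hpowge n)
    have h3 := (h _ hM0).2.2
    refine h3.trans ?_
    gcongr
    push_cast
    have h2 : (2:ℝ) ≤ (M₁:ℝ) := by exact_mod_cast le_trans (by norm_num) h5
    have h1M : (1:ℝ) ≤ (M₁:ℝ)^(2^n) := one_le_pow₀ (by linarith)
    calc (2:ℝ)^n ≤ (2:ℝ)^(2^n) := by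
          apply pow_le_pow_right₀ (by norm_num) (Nat.le_of_lt (Nat.lt_two_pow_self (n := n)))
      _ ≤ (M₁:ℝ)^(2^n) := pow_le_pow_left₀ (by norm_num) h2 _
      _ ≤ ((M₁:ℝ)^(2^n))^4 := le_self_pow₀ h1M (by norm_num)
  by_contra hne
  have hpos : 0 < |x - (k M₁ : ℝ) / (ℓ M₁ : ℝ)| := abs_pos.mpr (sub_ne_zero.mpr hne)
  obtain ⟨n, hn⟩ := pow_unbounded_of_one_lt (2 / |x - (k M₁ : ℝ) / (ℓ M₁ : ℝ)|)
    (show (1:ℝ) < 2 by norm_num)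
  have := hbound n
  rw [div_lt_iff₀ hpos] at hn
  have h2n : (0:ℝ) < 2^n := by positivity
  rw [le_div_iff₀ h2n] at this
  nlinarith
end

section
/- For every irrational α ∈ ℝ there exists a multiplicative semigroup Σ ⊆ ℕ with lower density liminf_{N→∞} #(Σ ∩ [1,N])/N ≥ 1/200 such that the sequence (σα mod 1)_{σ ∈ Σ} (enumerated in increasing order of σ) is not equidistributed in 𝕋 = ℝ/ℤ. -/
open Filter Real

namespace Stmt14Aux

/-- Walk lemma, positive step. -/
lemma walk_pos (y e : ℝ) (he : 0 < e) (he2 : e ≤ 1/1000) :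
    ∃ F : Finset ℕ, F ⊆ Finset.range (⌈9/(8*e)⌉₊ + 2) ∧ (1/(8*e) - 2 : ℝ) ≤ F.card ∧
      ∀ j ∈ F, ∃ m : ℤ, |y + j*e - m| ≤ 1/8 := by
  have h8e : (0:ℝ) < 8*e := by linarith
  have h125 : (125:ℝ) ≤ 1/(8*e) := by
    rw [le_div_iff₀ h8e]
    linarith
  set M : ℤ := ⌈y⌉ with hM
  set a : ℝ := ((M:ℝ) - y)/e with ha
  have hMy0 : 0 ≤ (M:ℝ) - y := by linarith [Int.le_ceil y]
  have hMy1 : (M:ℝ) - y ≤ 1 := by linarith [Int.ceil_lt_add_one y]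
  have ha0 : 0 ≤ a := div_nonneg hMy0 he.le
  have ha1 : a ≤ 1/e := by
    rw [ha, div_le_div_iff₀ he he]
    nlinarith
  set j₀ : ℕ := ⌈a⌉₊ with hj₀
  set j₁ : ℕ := ⌊a + 1/(8*e)⌋₊ with hj₁
  have hj0u : (j₀:ℝ) < a + 1 := Nat.ceil_lt_add_one ha0
  have hj0l : a ≤ (j₀:ℝ) := Nat.le_ceil a
  have hj1l : a + 1/(8*e) - 1 < (j₁:ℝ) := Nat.sub_one_lt_floor _
  have hj1u : (j₁:ℝ) ≤ a + 1/(8*e) := Nat.floor_le (by positivity)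
  have hle : j₀ ≤ j₁ := by
    have : (j₀:ℝ) ≤ (j₁:ℝ) := by linarith
    exact_mod_cast this
  refine ⟨Finset.Icc j₀ j₁, ?_, ?_, ?_⟩
  · intro j hj
    simp only [Finset.mem_Icc] at hj
    simp only [Finset.mem_range]
    have hjr : (j:ℝ) ≤ 9/(8*e) := by
      have : (j:ℝ) ≤ (j₁:ℝ) := by exact_mod_cast hj.2
      have h1e : 1/e = 8/(8*e) := by field_simp
      calc (j:ℝ) ≤ a + 1/(8*e) := by linarith
        _ ≤ 1/e + 1/(8*e) := by linarith
        _ = 9/(8*e) := by rw [h1e]; ring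
    have : (j:ℝ) ≤ (⌈9/(8*e)⌉₊ : ℝ) := le_trans hjr (Nat.le_ceil _)
    have : j ≤ ⌈9/(8*e)⌉₊ := by exact_mod_cast this
    omega
  · have hcard : (Finset.Icc j₀ j₁).card = j₁ + 1 - j₀ := Nat.card_Icc j₀ j₁
    rw [hcard]
    have : ((j₁ + 1 - j₀ : ℕ) : ℝ) = (j₁:ℝ) + 1 - (j₀:ℝ) := by
      have : j₀ ≤ j₁ + 1 := by omega
      push_cast [Nat.cast_sub this]
      ring
    rw [this]
    linarith
  · intro j hj
    simp only [Finset.mem_Icc] at hj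
    refine ⟨M, ?_⟩
    have hjl : a ≤ (j:ℝ) := le_trans hj0l (by exact_mod_cast hj.1)
    have hju : (j:ℝ) ≤ a + 1/(8*e) := le_trans (by exact_mod_cast hj.2) hj1u
    have h1 : (M:ℝ) - y ≤ j*e := by
      have := mul_le_mul_of_nonneg_right hjl he.le
      rw [ha, div_mul_cancel₀ _ he.ne'] at this
      linarith
    have h2 : (j:ℝ)*e ≤ (M:ℝ) - y + 1/8 := by
      have := mul_le_mul_of_nonneg_right hju he.le
      rw [add_mul, ha, div_mul_cancel₀ _ he.ne'] at this
      have h18 : 1/(8*e) * e = 1/8 := by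
        field_simp
      rw [h18] at this
      linarith
    rw [abs_le]
    constructor <;> linarith


lemma walk (y e : ℝ) (he : e ≠ 0) (he2 : |e| ≤ 1/1000) :
    ∃ F : Finset ℕ, F ⊆ Finset.range (⌈9/(8*|e|)⌉₊ + 2) ∧ (1/(8*|e|) - 2 : ℝ) ≤ F.card ∧
      ∀ j ∈ F, ∃ m : ℤ, |y + j*e - m| ≤ 1/8 := by
  rcases he.lt_or_gt with hneg | hpos
  · have habs : |e| = -e := abs_of_neg hneg
    obtain ⟨F, h1, h2, h3⟩ := walk_pos (-y) (-e) (by linarith) (by rw [← habs]; exact he2)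
    rw [habs]
    refine ⟨F, h1, h2, fun j hj => ?_⟩
    obtain ⟨m, hm⟩ := h3 j hj
    refine ⟨-m, ?_⟩
    have : y + j*e - ((-m : ℤ):ℝ) = -(-y + j*(-e) - m) := by push_cast; ring
    rw [this, abs_neg]
    exact hm
  · have habs : |e| = e := abs_of_pos hpos
    rw [habs]
    exact walk_pos y e hpos (by rw [← habs]; exact he2)

lemma count_good (θ x : ℝ) (q : ℕ) (hq : 0 < q) (P : ℤ)
    (he : (q:ℝ)*θ - P ≠ 0) (he2 : |(q:ℝ)*θ - P| ≤ 1/1000) :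
    ∃ K : ℕ, 0 < K ∧ 1/|(q:ℝ)*θ - P| ≤ K ∧ ∃ G : Finset ℕ, G ⊆ Finset.range K ∧
      (K:ℝ)/10 ≤ G.card ∧ ∀ k ∈ G, ∃ m : ℤ, |x + k*θ - m| ≤ 1/8 := by
  set e : ℝ := (q:ℝ)*θ - P with hedef
  set d : ℝ := |e| with hd
  have hd0 : 0 < d := abs_pos.mpr he
  have hd2 : d ≤ 1/1000 := he2
  have h8d : (0:ℝ) < 8*d := by linarith
  have h125 : (125:ℝ) ≤ 1/(8*d) := by rw [le_div_iff₀ h8d]; linarith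
  set J : ℕ := ⌈9/(8*d)⌉₊ + 2 with hJ
  have hJl : (9/(8*d) : ℝ) ≤ J := by
    calc (9/(8*d):ℝ) ≤ ⌈9/(8*d)⌉₊ := Nat.le_ceil _
    _ ≤ J := by rw [hJ]; push_cast; linarith
  have hJu : (J:ℝ) ≤ 9/(8*d) + 3 := by
    rw [hJ]
    push_cast
    have := Nat.ceil_lt_add_one (by positivity : (0:ℝ) ≤ 9/(8*d))
    linarith
  -- choose the good sets for each residue
  choose F hF1 hF2 hF3 using fun r : ℕ => walk (x + r*θ) e he he2
  refine ⟨q*J, by positivity, ?_, ?_⟩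
  · have h1 : (1/d : ℝ) ≤ 9/(8*d) := by
      rw [div_le_div_iff₀ hd0 h8d]; nlinarith
    have h2 : (J:ℝ) ≤ (q:ℝ)*J := by
      have hq1 : (1:ℝ) ≤ q := by exact_mod_cast hq
      nlinarith [Nat.cast_nonneg (α := ℝ) J]
    calc (1/d:ℝ) ≤ 9/(8*d) := h1
      _ ≤ J := hJl
      _ ≤ (q:ℝ)*J := h2
      _ = ((q*J : ℕ):ℝ) := by push_cast; ring
  · refine ⟨(Finset.range q).biUnion (fun r => (F r).image (fun j => r + j*q)), ?_, ?_, ?_⟩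
    · intro k hk
      simp only [Finset.mem_biUnion, Finset.mem_image, Finset.mem_range] at hk ⊢
      obtain ⟨r, hr, j, hj, rfl⟩ := hk
      have hjJ : j < J := Finset.mem_range.mp (hF1 r hj)
      calc r + j*q < q + j*q := by omega
        _ = q*(j+1) := by ring
        _ ≤ q*J := Nat.mul_le_mul_left q (by omega)
    · have hdisj : ∀ r₁ ∈ Finset.range q, ∀ r₂ ∈ Finset.range q, r₁ ≠ r₂ →
          Disjoint ((F r₁).image (fun j => r₁ + j*q)) ((F r₂).image (fun j => r₂ + j*q)) := by
        intro r₁ h1 r₂ h2 hne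
        simp only [Finset.mem_range] at h1 h2
        rw [Finset.disjoint_left]
        intro k hk1 hk2
        simp only [Finset.mem_image] at hk1 hk2
        obtain ⟨j1, _, hj1⟩ := hk1
        obtain ⟨j2, _, hj2⟩ := hk2
        apply hne
        have e1 : k % q = r₁ := by rw [← hj1]; simp [Nat.add_mul_mod_self_right, Nat.mod_eq_of_lt h1]
        have e2 : k % q = r₂ := by rw [← hj2]; simp [Nat.add_mul_mod_self_right, Nat.mod_eq_of_lt h2]
        rw [← e1, ← e2]
      rw [Finset.card_biUnion hdisj]
      have hinj : ∀ r : ℕ, ((F r).image (fun j => r + j*q)).card = (F r).card := by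
        intro r
        apply Finset.card_image_of_injective
        intro a b hab
        simp only at hab
        have : a*q = b*q := by omega
        exact Nat.eq_of_mul_eq_mul_right hq this
      have hsum : ((q:ℝ)) * (1/(8*d) - 2) ≤
          (((Finset.range q).sum fun r => ((F r).image (fun j => r + j*q)).card : ℕ) : ℝ) := by
        push_cast
        simp only [hinj]
        calc (q:ℝ) * (1/(8*d) - 2) = ∑ _r ∈ Finset.range q, (1/(8*d) - 2 : ℝ) := by
              rw [Finset.sum_const, Finset.card_range]; ring
          _ ≤ ∑ r ∈ Finset.range q, ((F r).card : ℝ) := by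
              apply Finset.sum_le_sum
              intro r _
              exact hF2 r
      have hfrac : ((q*J : ℕ):ℝ)/10 ≤ (q:ℝ) * (1/(8*d) - 2) := by
        rw [Nat.cast_mul]
        have hq0 : (0:ℝ) ≤ q := Nat.cast_nonneg q
        have hper : (J:ℝ)/10 ≤ 1/(8*d) - 2 := by
          have h9 : (9:ℝ)/(8*d) = 9*(1/(8*d)) := by ring
          rw [h9] at hJu
          linarith
        calc (q:ℝ)*(J:ℝ)/10 = (q:ℝ)*((J:ℝ)/10) := by ring
          _ ≤ (q:ℝ)*(1/(8*d) - 2) := by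
              apply mul_le_mul_of_nonneg_left hper hq0
      exact le_trans hfrac hsum
    · intro k hk
      simp only [Finset.mem_biUnion, Finset.mem_image, Finset.mem_range] at hk
      obtain ⟨r, hr, j, hj, rfl⟩ := hk
      obtain ⟨m, hm⟩ := hF3 r j hj
      refine ⟨m + j*P, ?_⟩
      have harg : x + ((r + j*q : ℕ):ℝ)*θ - ((m + j*P : ℤ):ℝ) = (x + r*θ) + j*e - m := by
        rw [hedef]; push_cast; ring
      rw [harg]
      exact hm


lemma geom_bound (w : ℂ) (hw : ‖w‖ = 1) (h1 : w ≠ 1) (L : ℕ) :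
    ‖∑ t ∈ Finset.Icc 1 L, w^t‖ ≤ 2/‖w - 1‖ := by
  have hsub : w - 1 ≠ 0 := sub_ne_zero.mpr h1
  rw [← Finset.Ico_add_one_right_eq_Icc, geom_sum_Ico h1 (by omega), norm_div]
  have hnum : ‖w^(L.succ) - w^1‖ ≤ 2 := by
    calc ‖w^(L.succ) - w^1‖ ≤ ‖w^(L.succ)‖ + ‖w^1‖ := norm_sub_le _ _
      _ = 2 := by rw [norm_pow, norm_pow, hw]; norm_num
  have hpos : 0 < ‖w - 1‖ := norm_pos_iff.mpr hsub
  exact (div_le_div_iff_of_pos_right hpos).mpr hnum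

lemma cos_ge (t : ℝ) (m : ℤ) (h : |t - (m:ℝ)| ≤ 1/8) : Real.sqrt 2/2 ≤ Real.cos (2*π*t) := by
  have h1 : 2*π*t = 2*π*(t - m) + m*(2*π) := by ring
  rw [h1, Real.cos_add_int_mul_two_pi, ← Real.cos_abs, ← Real.cos_pi_div_four]
  have habs : |2*π*(t-(m:ℝ))| = 2*π*|t-(m:ℝ)| := by
    rw [abs_mul, abs_of_pos (by positivity : (0:ℝ) < 2*π)]
  apply Real.cos_le_cos_of_nonneg_of_le_pi (abs_nonneg _) (by linarith [pi_pos])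
  rw [habs]
  nlinarith [pi_pos, abs_nonneg (t - (m:ℝ))]

lemma filter_eq_image_nth (p : ℕ → Prop) [DecidablePred p] (hp : (setOf p).Infinite) (M : ℕ) :
    (Finset.range M).filter p = (Finset.range (Nat.count p M)).image (Nat.nth p) := by
  ext k
  simp only [Finset.mem_filter, Finset.mem_image, Finset.mem_range]
  constructor
  · rintro ⟨hkM, hpk⟩
    exact ⟨Nat.count p k, Nat.count_strict_mono hpk hkM, Nat.nth_count hpk⟩
  · rintro ⟨i, hi, rfl⟩
    exact ⟨(Nat.lt_nth_iff_count_lt hp).mp hi, Nat.nth_mem_of_infinite hp i⟩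

lemma sum_nth_eq (p : ℕ → Prop) [DecidablePred p] (hp : (setOf p).Infinite) (M : ℕ) (f : ℕ → ℂ) :
    ∑ j ∈ Finset.range (Nat.count p M), f (Nat.nth p j) = ∑ k ∈ (Finset.range M).filter p, f k := by
  rw [filter_eq_image_nth p hp M, Finset.sum_image]
  intro a _ b _ h
  exact Nat.nth_injective hp h


end Stmt14Aux

open Stmt14Aux

set_option maxHeartbeats 1000000 in
theorem stmt14 (α : ℝ) (hα : Irrational α) :
    ∃ S : Set ℕ, (∀ a ∈ S, ∀ b ∈ S, a * b ∈ S) ∧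
      (1 / 200 : ℝ) ≤
        atTop.liminf (fun N : ℕ => ((S ∩ Set.Icc 1 N).ncard : ℝ) / (N : ℝ)) ∧
      -- the sequence `(σ_j α mod 1)`, with `σ_j` the increasing enumeration of `S`,
      -- is not equidistributed in `ℝ/ℤ`: it fails the Weyl criterion
      ¬ (∀ m : ℤ, m ≠ 0 →
        Tendsto (fun n : ℕ =>
            (∑ j ∈ Finset.range n,
              Complex.exp (2 * Real.pi * Complex.I * (m : ℂ) *
                ((Nat.nth (· ∈ S) j : ℕ) : ℂ) * (α : ℂ))) / (n : ℂ))
          atTop (nhds 0)) := by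
  classical
  refine ⟨{n : ℕ | (4 ∣ n ∧ n ≠ 0) ∨ (n % 4 = 2 ∧ Real.sqrt 2/2 ≤ Real.cos (2*π*(n:ℝ)*α))},
    ?_, ?_, ?_⟩
  · -- multiplicative closure
    intro a ha b hb
    simp only [Set.mem_setOf_eq] at ha hb ⊢
    have ha0 : a ≠ 0 := by
      rcases ha with ⟨_, h⟩ | ⟨h, _⟩
      · exact h
      · omega
    have hb0 : b ≠ 0 := by
      rcases hb with ⟨_, h⟩ | ⟨h, _⟩
      · exact h
      · omega
    left
    refine ⟨?_, Nat.mul_ne_zero ha0 hb0⟩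
    rcases ha with ⟨hdvd, _⟩ | ⟨ha2, _⟩
    · exact hdvd.mul_right b
    · rcases hb with ⟨hdvd, _⟩ | ⟨hb2, _⟩
      · exact hdvd.mul_left a
      · obtain ⟨s, rfl⟩ : ∃ s, a = 4*s+2 := ⟨a/4, by omega⟩
        obtain ⟨t, rfl⟩ : ∃ t, b = 4*t+2 := ⟨b/4, by omega⟩
        exact ⟨4*s*t+2*s+2*t+1, by ring⟩
  · -- density
    apply Filter.le_liminf_of_le
    · -- coboundedness: the sequence is eventually ≤ 1
      apply Filter.isCoboundedUnder_ge_of_eventually_le atTop (x := 1)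
      filter_upwards with N
      rcases Nat.eq_zero_or_pos N with rfl | hN
      · simp
      · have hsub : {n : ℕ | (4 ∣ n ∧ n ≠ 0) ∨
            (n % 4 = 2 ∧ Real.sqrt 2/2 ≤ Real.cos (2*π*(n:ℝ)*α))} ∩ Set.Icc 1 N
            ⊆ Set.Icc 1 N := Set.inter_subset_right
        have hfin : (Set.Icc (1:ℕ) N).Finite := Set.finite_Icc 1 N
        have hle : ({n : ℕ | (4 ∣ n ∧ n ≠ 0) ∨
            (n % 4 = 2 ∧ Real.sqrt 2/2 ≤ Real.cos (2*π*(n:ℝ)*α))} ∩ Set.Icc 1 N).ncard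
            ≤ (Set.Icc (1:ℕ) N).ncard := Set.ncard_le_ncard hsub hfin
        have hicc : (Set.Icc (1:ℕ) N).ncard = N := by
          rw [← Finset.coe_Icc, Set.ncard_coe_finset, Nat.card_Icc]
          omega
        rw [div_le_one (by exact_mod_cast hN : (0:ℝ) < N)]
        calc (({n : ℕ | (4 ∣ n ∧ n ≠ 0) ∨
            (n % 4 = 2 ∧ Real.sqrt 2/2 ≤ Real.cos (2*π*(n:ℝ)*α))} ∩ Set.Icc 1 N).ncard : ℝ)
            ≤ ((Set.Icc (1:ℕ) N).ncard : ℝ) := by exact_mod_cast hle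
          _ = (N:ℝ) := by rw [hicc]
    · -- eventually at least 1/200
      filter_upwards [eventually_ge_atTop 8] with N hN
      have hN0 : (0:ℝ) < N := by exact_mod_cast Nat.pos_of_ne_zero (by omega)
      have himg : (((Finset.Icc 1 (N/4)).image (fun t => 4*t) : Finset ℕ) : Set ℕ)
          ⊆ {n : ℕ | (4 ∣ n ∧ n ≠ 0) ∨
            (n % 4 = 2 ∧ Real.sqrt 2/2 ≤ Real.cos (2*π*(n:ℝ)*α))} ∩ Set.Icc 1 N := by
        intro y hy
        simp only [Finset.coe_image, Set.mem_image, Finset.mem_coe, Finset.mem_Icc] at hy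
        obtain ⟨t, ht, rfl⟩ := hy
        constructor
        · exact Or.inl ⟨⟨t, rfl⟩, by omega⟩
        · simp only [Set.mem_Icc]
          omega
      have hfin : ({n : ℕ | (4 ∣ n ∧ n ≠ 0) ∨
          (n % 4 = 2 ∧ Real.sqrt 2/2 ≤ Real.cos (2*π*(n:ℝ)*α))} ∩ Set.Icc 1 N).Finite :=
        (Set.finite_Icc 1 N).subset Set.inter_subset_right
      have hcard1 : (((Finset.Icc 1 (N/4)).image (fun t => 4*t) : Finset ℕ) : Set ℕ).ncard
          = N/4 := by
        rw [Set.ncard_coe_finset, Finset.card_image_of_injective _ (fun a b h => by omega),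
          Nat.card_Icc]
        omega
      have hge : N/4 ≤ ({n : ℕ | (4 ∣ n ∧ n ≠ 0) ∨
          (n % 4 = 2 ∧ Real.sqrt 2/2 ≤ Real.cos (2*π*(n:ℝ)*α))} ∩ Set.Icc 1 N).ncard := by
        rw [← hcard1]
        exact Set.ncard_le_ncard himg hfin
      rw [le_div_iff₀ hN0]
      have h50 : (N:ℝ) ≤ 200 * (N/4 : ℕ) := by
        have : N ≤ 200 * (N/4) := by omega
        exact_mod_cast this
      have : ((N/4 : ℕ) : ℝ) ≤ (({n : ℕ | (4 ∣ n ∧ n ≠ 0) ∨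
          (n % 4 = 2 ∧ Real.sqrt 2/2 ≤ Real.cos (2*π*(n:ℝ)*α))} ∩ Set.Icc 1 N).ncard : ℝ) := by
        exact_mod_cast hge
      linarith
  · -- Weyl failure
    intro Hall
    have H1 := Hall 1 one_ne_zero
    set S : Set ℕ := {n : ℕ | (4 ∣ n ∧ n ≠ 0) ∨
      (n % 4 = 2 ∧ Real.sqrt 2/2 ≤ Real.cos (2*π*(n:ℝ)*α))} with hSdef
    have hpinf : (setOf (· ∈ S)).Infinite := by
      apply Set.infinite_of_injective_forall_mem (f := fun k : ℕ => 4*(k+1))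
      · intro a b hab
        simp only at hab
        omega
      · intro k
        simp only [Set.mem_setOf_eq, hSdef]
        exact Or.inl ⟨⟨k+1, rfl⟩, by omega⟩
    have hθ : Irrational (4*α) := by
      have h4 : ((4:ℕ):ℝ) = (4:ℝ) := by norm_num
      have := hα.natCast_mul (m := 4) (by norm_num)
      rwa [h4] at this
    -- the unit complex number for the 4ℕ part
    set w : ℂ := Complex.exp ((8*π*α : ℝ) * Complex.I) with hwdef
    have hwnorm : ‖w‖ = 1 := Complex.norm_exp_ofReal_mul_I _
    have hwne : w ≠ 1 := by
      rw [hwdef]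
      intro hone
      rw [Complex.exp_eq_one_iff] at hone
      obtain ⟨nz, hnz⟩ := hone
      have hI : ((8*π*α : ℝ):ℂ) = 2*π*nz := by
        have h2 : ((8*π*α : ℝ):ℂ) * Complex.I = (2*(π:ℂ)*nz) * Complex.I := by
          rw [hnz]; ring
        exact mul_right_cancel₀ Complex.I_ne_zero h2
      have hre : (8*π*α : ℝ) = 2*π*(nz:ℝ) := by
        have := congrArg Complex.re hI
        simpa using this
      have h4α : 4*α = (nz:ℝ) := by
        have hπ : (0:ℝ) < π := pi_pos
        nlinarith [hre]
      exact hθ.ne_int nz h4α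
    set C : ℝ := 2/‖w - 1‖ with hCdef
    have hC0 : 0 ≤ C := by positivity
    rw [Metric.tendsto_atTop] at H1
    obtain ⟨n₀, hn₀⟩ := H1 (1/100) (by norm_num)
    -- Dirichlet approximation with a large parameter
    set nn : ℕ := 10*n₀ + 1000 + ⌈20*C⌉₊ with hnndef
    have hnnpos : 0 < nn := by omega
    obtain ⟨j, k, hk0, hkn, hjk⟩ := Real.exists_int_int_abs_mul_sub_le (4*α) hnnpos
    set q : ℕ := k.toNat with hqdef
    have hq0 : 0 < q := by omega
    have hqk : ((q:ℕ):ℝ) = (k:ℝ) := by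
      rw [hqdef]
      exact_mod_cast congrArg (fun z : ℤ => (z:ℝ)) (Int.toNat_of_nonneg hk0.le)
    have hene : (q:ℝ)*(4*α) - (j:ℝ) ≠ 0 := by
      rw [hqk]
      intro h0
      have hirr : Irrational ((k:ℤ)*(4*α)) := hθ.intCast_mul (by omega)
      exact hirr.ne_int j (by linarith)
    have hesmall : |(q:ℝ)*(4*α) - (j:ℝ)| ≤ 1/1000 := by
      rw [hqk]
      refine le_trans hjk ?_
      rw [div_le_div_iff₀ (by positivity) (by norm_num)]
      have : (1000:ℝ) ≤ (nn:ℝ) := by exact_mod_cast (by omega : 1000 ≤ nn)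
      linarith
    obtain ⟨K, hK0, hKge, G, hGsub, hGcard, hGphase⟩ :=
      count_good (4*α) (2*α) q hq0 j hene hesmall
    have hKnn : ((nn:ℝ)+1) ≤ (K:ℝ) := by
      have hepos : 0 < |(q:ℝ)*(4*α) - (j:ℝ)| := abs_pos.mpr hene
      have h1 : ((nn:ℝ)+1) ≤ 1/|(q:ℝ)*(4*α) - (j:ℝ)| := by
        rw [le_one_div (by positivity) hepos]
        rw [hqk]
        exact hjk.trans_eq (by norm_num)
      linarith
    -- the two pieces of S below 4K
    set Afin : Finset ℕ := (Finset.range (4*K)).filter (fun k' => 4 ∣ k' ∧ k' ≠ 0) with hAdef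
    set Bfin : Finset ℕ := (Finset.range (4*K)).filter
      (fun k' => k' % 4 = 2 ∧ Real.sqrt 2/2 ≤ Real.cos (2*π*(k':ℝ)*α)) with hBdef
    have hsplit : (Finset.range (4*K)).filter (· ∈ S) = Afin ∪ Bfin := by
      rw [hAdef, hBdef, ← Finset.filter_or]
      apply Finset.filter_congr
      intro k' _
      simp only [hSdef, Set.mem_setOf_eq]
    have hdisjAB : Disjoint Afin Bfin := by
      rw [Finset.disjoint_left]
      intro a ha hb
      rw [hAdef, Finset.mem_filter] at ha
      rw [hBdef, Finset.mem_filter] at hb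
      omega
    -- A is the image of an interval
    have hA : Afin = (Finset.Ico 1 K).image (fun t => 4*t) := by
      rw [hAdef]
      ext k'
      simp only [Finset.mem_filter, Finset.mem_range, Finset.mem_image, Finset.mem_Ico]
      constructor
      · rintro ⟨hkM, hdvd, hne⟩
        exact ⟨k'/4, by omega, by omega⟩
      · rintro ⟨t, ht, rfl⟩
        exact ⟨by omega, ⟨t, rfl⟩, by omega⟩
    set n : ℕ := Nat.count (· ∈ S) (4*K) with hndef
    have hcount : n = ((Finset.range (4*K)).filter (· ∈ S)).card := by
      rw [hndef]; exact Nat.count_eq_card_filter_range _ _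
    have hncard : n = Afin.card + Bfin.card := by
      rw [hcount, hsplit, Finset.card_union_of_disjoint hdisjAB]
    have hAcard : Afin.card ≤ K := by
      rw [hA]
      calc ((Finset.Ico 1 K).image (fun t => 4*t)).card ≤ (Finset.Ico 1 K).card :=
            Finset.card_image_le
        _ ≤ K := by rw [Nat.card_Ico]; omega
    have hBcardK : Bfin.card ≤ K := by
      have h1 : Bfin.card ≤ (Finset.range K).card := by
        apply Finset.card_le_card_of_injOn (fun a => a/4)
        · intro a ha
          rw [Finset.mem_coe, hBdef, Finset.mem_filter, Finset.mem_range] at ha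
          simp only [Finset.coe_range, Set.mem_Iio]
          omega
        · intro a ha b hb hab
          rw [Finset.mem_coe, hBdef, Finset.mem_filter] at ha hb
          simp only at hab
          omega
      simpa using h1
    have hτK : (K:ℝ)/10 ≤ (Bfin.card:ℝ) := by
      have himg : G.image (fun k' => 4*k'+2) ⊆ Bfin := by
        intro y hy
        rw [Finset.mem_image] at hy
        obtain ⟨k', hkG, rfl⟩ := hy
        have hkK : k' < K := Finset.mem_range.mp (hGsub hkG)
        rw [hBdef, Finset.mem_filter, Finset.mem_range]
        refine ⟨by omega, by omega, ?_⟩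
        obtain ⟨m, hm⟩ := hGphase k' hkG
        have harg : 2*π*((4*k'+2:ℕ):ℝ)*α = 2*π*(((4*k'+2:ℕ):ℝ)*α) := by ring
        rw [harg]
        apply cos_ge _ m
        have h2 : ((4*k'+2:ℕ):ℝ)*α - (m:ℝ) = 2*α + (k':ℝ)*(4*α) - (m:ℝ) := by
          push_cast; ring
        rw [h2]
        exact hm
      have hcardim : (G.image (fun k' => 4*k'+2)).card = G.card :=
        Finset.card_image_of_injective _ (fun a b h => by omega)
      have h2 : G.card ≤ Bfin.card := by
        rw [← hcardim]; exact Finset.card_le_card himg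
      calc (K:ℝ)/10 ≤ (G.card:ℝ) := hGcard
        _ ≤ (Bfin.card:ℝ) := by exact_mod_cast h2
    have hn2K : (n:ℝ) ≤ 2*(K:ℝ) := by
      have h1 : n ≤ 2*K := by omega
      exact_mod_cast h1
    have hnτ : (Bfin.card:ℝ) ≤ (n:ℝ) := by
      have : Bfin.card ≤ n := by omega
      exact_mod_cast this
    have hnK10 : (K:ℝ)/10 ≤ (n:ℝ) := le_trans hτK hnτ
    have hKposR : (0:ℝ) < (K:ℝ) := by exact_mod_cast hK0
    have hnpos : 0 < (n:ℝ) := by linarith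
    have hn0nat : n₀ ≤ n := by
      by_contra hcon
      push_neg at hcon
      have h1 : (n:ℝ) < (n₀:ℝ) := by exact_mod_cast hcon
      have h2 : (10*(n₀:ℕ) : ℕ) ≤ nn := by omega
      have h3 : 10*(n₀:ℝ) ≤ (nn:ℝ) := by exact_mod_cast h2
      linarith
    have hn₀' := hn₀ n hn0nat
    -- rewrite the sum
    have hveq : (∑ j' ∈ Finset.range n, Complex.exp
          (2*(π:ℂ)*Complex.I*((1:ℤ):ℂ)*((Nat.nth (· ∈ S) j' : ℕ):ℂ)*(α:ℂ)))
        = ∑ k' ∈ (Finset.range (4*K)).filter (· ∈ S),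
            Complex.exp ((2*π*(k':ℝ)*α : ℝ) * Complex.I) := by
      have h0 := sum_nth_eq (· ∈ S) hpinf (4*K)
        (fun k' => Complex.exp (2*(π:ℂ)*Complex.I*((1:ℤ):ℂ)*((k':ℕ):ℂ)*(α:ℂ)))
      rw [hndef]
      refine h0.trans ?_
      apply Finset.sum_congr rfl
      intro k' _
      congr 1
      push_cast
      ring
    have hAsum : ∑ k' ∈ Afin, Complex.exp ((2*π*(k':ℝ)*α : ℝ) * Complex.I)
        = ∑ t ∈ Finset.Icc 1 (K-1), w^t := by
      have hIco : Finset.Ico 1 K = Finset.Icc 1 (K-1) := by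
        have hK1 : K = (K-1)+1 := by omega
        conv_lhs => rw [hK1]
        rw [Finset.Ico_add_one_right_eq_Icc]
      rw [hA, hIco, Finset.sum_image (fun x _ y _ h => by omega : ∀ x ∈ Finset.Icc 1 (K-1),
        ∀ y ∈ Finset.Icc 1 (K-1), 4*x = 4*y → x = y)]
      apply Finset.sum_congr rfl
      intro t _
      have harg : ((2*π*((4*t:ℕ):ℝ)*α : ℝ):ℂ) * Complex.I
          = ((t:ℕ):ℂ) * (((8*π*α:ℝ):ℂ) * Complex.I) := by
        push_cast
        ring
      rw [harg, Complex.exp_nat_mul, hwdef]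
    have hAre : -C ≤ (∑ k' ∈ Afin, Complex.exp ((2*π*(k':ℝ)*α : ℝ) * Complex.I)).re := by
      have hnorm : ‖∑ k' ∈ Afin, Complex.exp ((2*π*(k':ℝ)*α : ℝ) * Complex.I)‖ ≤ C := by
        rw [hAsum, hCdef]
        exact geom_bound w hwnorm hwne (K-1)
      have habs := Complex.abs_re_le_norm (∑ k' ∈ Afin,
        Complex.exp ((2*π*(k':ℝ)*α : ℝ) * Complex.I))
      have := abs_le.mp (habs.trans hnorm)
      linarith [this.1]
    have hBre : (Bfin.card:ℝ) * (Real.sqrt 2/2)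
        ≤ (∑ k' ∈ Bfin, Complex.exp ((2*π*(k':ℝ)*α : ℝ) * Complex.I)).re := by
      rw [Complex.re_sum]
      have hterm : ∀ k' ∈ Bfin, Real.sqrt 2/2
          ≤ (Complex.exp ((2*π*(k':ℝ)*α : ℝ) * Complex.I)).re := by
        intro k' hk
        rw [Complex.exp_ofReal_mul_I_re]
        rw [hBdef, Finset.mem_filter] at hk
        exact hk.2.2
      calc (Bfin.card:ℝ) * (Real.sqrt 2/2) = ∑ _k' ∈ Bfin, (Real.sqrt 2/2) := by
            rw [Finset.sum_const, nsmul_eq_mul]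
        _ ≤ _ := Finset.sum_le_sum hterm
    have hsq : (7:ℝ)/10 ≤ Real.sqrt 2/2 := by
      nlinarith [Real.sq_sqrt (by norm_num : (0:ℝ) ≤ 2), Real.sqrt_nonneg 2]
    have hK20C : 20*C ≤ (K:ℝ) := by
      have h0 : ⌈20*C⌉₊ ≤ nn := by rw [hnndef]; omega
      have h1 : (⌈20*C⌉₊:ℝ) ≤ (nn:ℝ) := Nat.cast_le.mpr h0
      linarith [Nat.le_ceil (20*C), hKnn]
    have hresum : (1/100 : ℝ) ≤ ((∑ j' ∈ Finset.range n, Complex.exp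
        (2*(π:ℂ)*Complex.I*((1:ℤ):ℂ)*((Nat.nth (· ∈ S) j' : ℕ):ℂ)*(α:ℂ)))/((n:ℕ):ℂ)).re := by
      rw [Complex.div_natCast_re, hveq, hsplit, Finset.sum_union hdisjAB, Complex.add_re]
      rw [le_div_iff₀ hnpos]
      have hτ7 : (Bfin.card:ℝ)*(7/10) ≤ (Bfin.card:ℝ)*(Real.sqrt 2/2) :=
        mul_le_mul_of_nonneg_left hsq (by positivity)
      linarith [hAre, hBre, hτK, hn2K, hτ7, hK20C]
    rw [dist_eq_norm, sub_zero] at hn₀'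
    have hre_le := Complex.re_le_norm ((∑ j' ∈ Finset.range n, Complex.exp
        (2*(π:ℂ)*Complex.I*((1:ℤ):ℂ)*((Nat.nth (· ∈ S) j' : ℕ):ℂ)*(α:ℂ)))/((n:ℕ):ℂ))
    linarith [hresum, hre_le, hn₀']
end

section
/- Let Σ ⊆ ℕ be a multiplicative semigroup with liminf_{N→∞} #(Σ ∩ [1,N])/N > 0, and let μ be an ergodic Σ-invariant Borel probability measure on 𝕋 = ℝ/ℤ with no atoms. Then for every m ∈ ℤ \ {0}, the Fourier coefficient μ̂(m) = ∫ e^{−2πimx} dμ(x) satisfies: the averages (1/#(Σ∩[1,N])) ∑_{n∈Σ∩[1,N]} |μ̂(mn)|² do not converge to a positive limit along every subsequence; in particular, if additionally liminf over Σ of |μ̂(mn)|² were positive for all m, Wiener's lemma would force μ to have an atom, a contradiction. Consequently, by Wiener's lemma, positive lower density of Σ together with atomlessness and invariance forces μ to be Lebesgue measure. -/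
open MeasureTheory Filter

namespace Stmt15Aux

open AddCircle Complex ComplexConjugate

noncomputable def mc (μ : Measure (AddCircle (1:ℝ))) (m : ℤ) : ℂ :=
  ∫ x, fourier (-m) x ∂μ

lemma mc_def (μ : Measure (AddCircle (1:ℝ))) (m : ℤ) :
    mc μ m = ∫ x, fourier (-m) x ∂μ := rfl

lemma cont_integrable (μ : Measure (AddCircle (1:ℝ))) [IsFiniteMeasure μ]
    (f : C(AddCircle (1:ℝ), ℂ)) : Integrable f μ :=
  f.continuous.integrable_of_hasCompactSupport (HasCompactSupport.of_compactSpace _)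

lemma mc_mul (μ : Measure (AddCircle (1:ℝ))) [IsProbabilityMeasure μ] (n : ℕ)
    (hn : ∀ A : Set (AddCircle (1:ℝ)), MeasurableSet A →
      μ ((fun x : AddCircle (1:ℝ) => n • x) ⁻¹' A) = μ A) (m : ℤ) :
    mc μ (m * n) = mc μ m := by
  have hcont : Continuous (fun x : AddCircle (1:ℝ) => n • x) := continuous_nsmul _
  have hmap : μ.map (fun x : AddCircle (1:ℝ) => n • x) = μ := by
    ext A hA
    rw [Measure.map_apply hcont.measurable hA, hn A hA]
  have key : ∀ x : AddCircle (1:ℝ), fourier (-(m * (n:ℤ))) x = fourier (-m) (n • x) := by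
    intro x
    rw [fourier_apply, fourier_apply, ← natCast_zsmul, smul_smul, neg_mul]
  calc mc μ (m * n) = ∫ x, fourier (-m) (n • x) ∂μ := by
        unfold mc; simp_rw [key]
    _ = ∫ x, fourier (-m) x ∂(μ.map (fun x : AddCircle (1:ℝ) => n • x)) := by
        rw [integral_map hcont.measurable.aemeasurable
          ((fourier (-m)).continuous.aestronglyMeasurable)]
    _ = mc μ m := by rw [hmap]; rfl

lemma norm_fourier (k : ℤ) (x : AddCircle (1:ℝ)) : ‖(fourier k x : ℂ)‖ = 1 := by
  rw [fourier_apply]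
  exact Circle.norm_coe _

lemma sum_reindex (f : ℤ → ℂ) (N : ℕ) :
    ∑ k ∈ Finset.Icc (-(N:ℤ)) (N:ℤ), f k
      = ∑ j ∈ Finset.range (2*N+1), f (-(N:ℤ) + j) := by
  refine Finset.sum_nbij' (fun k => (k + N).toNat) (fun j => -(N:ℤ) + j) ?_ ?_ ?_ ?_ ?_
  · intro a ha; simp only [Finset.mem_Icc] at ha; simp only [Finset.mem_range]; omega
  · intro b hb; simp only [Finset.mem_range] at hb; simp only [Finset.mem_Icc]; omega
  · intro a ha; simp only [Finset.mem_Icc] at ha; omega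
  · intro b hb; simp only [Finset.mem_range] at hb; omega
  · intro a ha; simp only [Finset.mem_Icc] at ha; congr 1; omega

lemma fourier_pow (z : AddCircle (1:ℝ)) (j : ℕ) :
    (fourier (j:ℤ) z : ℂ) = (fourier 1 z : ℂ) ^ j := by
  induction j with
  | zero => simpa using fourier_zero
  | succ j ih =>
    rw [show ((j+1:ℕ):ℤ) = (j:ℤ)+1 by push_cast; ring, fourier_add, ih, pow_succ]

lemma fourier_sum_bound {z : AddCircle (1:ℝ)} (hz : z ≠ 0) (N : ℕ) :
    ‖∑ k ∈ Finset.Icc (-(N:ℤ)) (N:ℤ), (fourier k z : ℂ)‖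
      ≤ 2 / ‖(fourier 1 z : ℂ) - 1‖ := by
  set u : ℂ := fourier 1 z with hu
  have hu1 : u ≠ 1 := by
    rw [hu, fourier_one]
    intro h
    apply hz
    apply injective_toCircle (one_ne_zero : (1:ℝ) ≠ 0)
    apply Subtype.coe_injective
    show (toCircle z : ℂ) = (toCircle (0 : AddCircle (1:ℝ)) : ℂ)
    rw [h]
    exact (fourier_zero' (T := (1:ℝ))).symm
  have hnorm : ∀ k : ℤ, ‖(fourier k z : ℂ)‖ = 1 := fun k => norm_fourier k z
  have hs : ∑ k ∈ Finset.Icc (-(N:ℤ)) (N:ℤ), (fourier k z : ℂ)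
      = (fourier (-(N:ℤ)) z : ℂ) * ((u ^ (2*N+1) - 1) / (u - 1)) := by
    rw [sum_reindex (fun k => (fourier k z : ℂ)) N]
    have : ∀ j : ℕ, (fourier (-(N:ℤ) + j) z : ℂ) = (fourier (-(N:ℤ)) z : ℂ) * u ^ j := by
      intro j; rw [fourier_add, fourier_pow]
    simp_rw [this, ← Finset.mul_sum, geom_sum_eq hu1]
  rw [hs, norm_mul, hnorm, one_mul, norm_div]
  have hpos : 0 < ‖u - 1‖ := by
    rw [norm_pos_iff]
    exact sub_ne_zero.mpr hu1
  have h2 : ‖u ^ (2*N+1) - 1‖ ≤ 2 := by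
    calc ‖u ^ (2*N+1) - 1‖ ≤ ‖u ^ (2*N+1)‖ + ‖(1:ℂ)‖ := norm_sub_le _ _
    _ ≤ 2 := by
      rw [norm_pow, hu, norm_fourier]
      norm_num
  gcongr

lemma hden (N : ℕ) : ‖(2*(N:ℂ)+1)‖ = 2*(N:ℝ)+1 := by
  have h : (2*(N:ℂ)+1) = (((2*N+1 : ℕ)) : ℂ) := by push_cast; ring
  rw [h, Complex.norm_natCast]
  push_cast; ring

lemma card_Icc_int (N : ℕ) : (Finset.Icc (-(N:ℤ)) (N:ℤ)).card = 2*N+1 := by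
  rw [Int.card_Icc]; omega

lemma wiener (μ : Measure (AddCircle (1:ℝ))) [IsProbabilityMeasure μ]
    (hatomless : ∀ x : AddCircle (1:ℝ), μ {x} = 0) :
    Tendsto (fun N : ℕ => (∑ k ∈ Finset.Icc (-(N:ℤ)) (N:ℤ), ‖mc μ k‖^2) / (2*N+1))
      atTop (nhds 0) := by
  set ν := μ.prod μ with hν
  set A : ℕ → ℝ := fun N => (∑ k ∈ Finset.Icc (-(N:ℤ)) (N:ℤ), ‖mc μ k‖^2) / (2*N+1) with hA
  set F : ℕ → AddCircle (1:ℝ) × AddCircle (1:ℝ) → ℂ :=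
    fun N p => (∑ k ∈ Finset.Icc (-(N:ℤ)) (N:ℤ), (fourier k (p.1 - p.2) : ℂ)) / (2*(N:ℂ)+1)
    with hF
  have hgcont : ∀ k : ℤ, Continuous
      (fun p : AddCircle (1:ℝ) × AddCircle (1:ℝ) => (fourier k (p.1 - p.2) : ℂ)) :=
    fun k => (fourier k).continuous.comp (continuous_fst.sub continuous_snd)
  have hgint : ∀ k : ℤ, Integrable (fun p : AddCircle (1:ℝ) × AddCircle (1:ℝ) =>
      (fourier k (p.1 - p.2) : ℂ)) ν := fun k =>
    (hgcont k).integrable_of_hasCompactSupport (HasCompactSupport.of_compactSpace _)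
  have hkey : ∀ k : ℤ, ∫ p, (fourier k (p.1 - p.2) : ℂ) ∂ν = ((‖mc μ k‖^2 : ℝ) : ℂ) := by
    intro k
    have hpt : ∀ p : AddCircle (1:ℝ) × AddCircle (1:ℝ),
        (fourier k (p.1 - p.2) : ℂ) = fourier k p.1 * fourier (-k) p.2 := by
      intro p
      rw [fourier_apply, fourier_apply, fourier_apply, smul_sub, sub_eq_add_neg, ← neg_smul,
        toCircle_add, Circle.coe_mul]
    simp_rw [hpt]
    rw [hν, integral_prod_mul (fun x => (fourier k x : ℂ)) (fun y => (fourier (-k) y : ℂ))]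
    have h1 : ∫ x, (fourier k x : ℂ) ∂μ = conj (mc μ k) := by
      unfold mc
      rw [← integral_conj]
      congr 1; ext x
      rw [← fourier_neg, neg_neg]
    have h2 : ∫ y, (fourier (-k) y : ℂ) ∂μ = mc μ k := rfl
    rw [h1, h2, mul_comm, Complex.mul_conj, Complex.normSq_eq_norm_sq]
  have havg : ∀ N : ℕ, ((A N : ℝ) : ℂ) = ∫ p, F N p ∂ν := by
    intro N
    calc ((A N : ℝ) : ℂ)
        = (∑ k ∈ Finset.Icc (-(N:ℤ)) (N:ℤ), ((‖mc μ k‖^2 : ℝ) : ℂ)) / (2*(N:ℂ)+1) := by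
          rw [hA]; push_cast; ring
      _ = (∑ k ∈ Finset.Icc (-(N:ℤ)) (N:ℤ),
            ∫ p, (fourier k (p.1 - p.2) : ℂ) ∂ν) / (2*(N:ℂ)+1) := by simp_rw [hkey]
      _ = ∫ p, F N p ∂ν := by
          rw [← integral_finset_sum _ (fun k _ => hgint k), ← integral_div]
  set flim : AddCircle (1:ℝ) × AddCircle (1:ℝ) → ℂ :=
    fun p => if p.1 = p.2 then 1 else 0 with hflim
  have hN0 : ∀ N : ℕ, (2*(N:ℂ)+1) ≠ 0 := by
    intro N h
    have := congrArg Complex.re h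
    simp at this
    norm_cast at this
  have hbound : ∀ N : ℕ, ∀ᵐ p ∂ν, ‖F N p‖ ≤ (fun _ => (1:ℝ)) p := by
    intro N
    filter_upwards with p
    rw [hF]
    simp only
    rw [norm_div, hden, div_le_one (by positivity)]
    calc ‖∑ k ∈ Finset.Icc (-(N:ℤ)) (N:ℤ), (fourier k (p.1 - p.2) : ℂ)‖
        ≤ ∑ k ∈ Finset.Icc (-(N:ℤ)) (N:ℤ), ‖(fourier k (p.1 - p.2) : ℂ)‖ :=
          norm_sum_le _ _
      _ = 2*(N:ℝ)+1 := by
          simp_rw [norm_fourier]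
          rw [Finset.sum_const, card_Icc_int]
          push_cast; ring
  have hlim : ∀ᵐ p ∂ν, Tendsto (fun N => F N p) atTop (nhds (flim p)) := by
    filter_upwards with p
    by_cases hp : p.1 = p.2
    · have hz : p.1 - p.2 = 0 := sub_eq_zero.mpr hp
      have : ∀ N : ℕ, F N p = 1 := by
        intro N
        rw [hF]
        simp only [hz]
        simp only [fourier_eval_zero]
        rw [Finset.sum_const, card_Icc_int, div_eq_one_iff_eq (hN0 N)]
        push_cast; ring
      simp_rw [this, hflim, if_pos hp]
      exact tendsto_const_nhds
    · have hz : p.1 - p.2 ≠ 0 := sub_ne_zero.mpr hp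
      rw [hflim]; simp only [if_neg hp]
      have htend : Tendsto (fun N : ℕ =>
          (2 / ‖(fourier 1 (p.1 - p.2) : ℂ) - 1‖) / (2*(N:ℝ)+1)) atTop (nhds 0) := by
        apply Tendsto.div_atTop tendsto_const_nhds
        apply tendsto_atTop_add_const_right
        exact (tendsto_natCast_atTop_atTop).const_mul_atTop two_pos
      apply squeeze_zero_norm _ htend
      intro N
      rw [hF]
      simp only
      rw [norm_div, hden]
      gcongr
      exact fourier_sum_bound hz N
  have hdiag : ν {p : AddCircle (1:ℝ) × AddCircle (1:ℝ) | p.1 = p.2} = 0 := by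
    have hms : MeasurableSet {p : AddCircle (1:ℝ) × AddCircle (1:ℝ) | p.1 = p.2} :=
      measurableSet_eq_fun measurable_fst measurable_snd
    rw [hν, Measure.prod_apply hms]
    have hsl : ∀ x : AddCircle (1:ℝ),
        Prod.mk x ⁻¹' {p : AddCircle (1:ℝ) × AddCircle (1:ℝ) | p.1 = p.2} = {x} := by
      intro x; ext y; simp [eq_comm]
    simp_rw [hsl, hatomless, lintegral_zero]
  have hfzero : ∫ p, flim p ∂ν = 0 := by
    have hae : ∀ᵐ p ∂ν, flim p = 0 := by
      have : ∀ᵐ p ∂ν, ¬ (p.1 = p.2) := by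
        rw [ae_iff]
        simpa using hdiag
      filter_upwards [this] with p hp
      rw [hflim]; simp [hp]
    rw [integral_congr_ae hae, integral_zero]
  have hmeas : ∀ N : ℕ, AEStronglyMeasurable (F N) ν := by
    intro N
    apply Continuous.aestronglyMeasurable
    exact (continuous_finset_sum _ fun k _ => hgcont k).div_const _
  have hDCT := tendsto_integral_of_dominated_convergence (fun _ => (1:ℝ)) hmeas
    (integrable_const 1) hbound hlim
  rw [hfzero] at hDCT
  simp_rw [← havg] at hDCT
  have h2 : Tendsto (fun N => ((A N : ℝ) : ℂ).re) atTop (nhds (Complex.re 0)) :=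
    (Complex.continuous_re.tendsto _).comp hDCT
  simpa using h2

noncomputable def intCLM (μ : Measure (AddCircle (1:ℝ))) [IsProbabilityMeasure μ] :
    C(AddCircle (1:ℝ), ℂ) →L[ℂ] ℂ :=
  LinearMap.mkContinuous
    { toFun := fun g => ∫ x, g x ∂μ
      map_add' := fun g h => by
        show ∫ x, (g + h) x ∂μ = _
        simp only [ContinuousMap.add_apply]
        exact integral_add (cont_integrable μ g) (cont_integrable μ h)
      map_smul' := fun c g => by
        show ∫ x, (c • g) x ∂μ = _
        simp only [ContinuousMap.smul_apply, smul_eq_mul]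
        rw [integral_const_mul]
        rfl }
    1
    (fun g => by
      rw [one_mul]
      have h := norm_integral_le_of_norm_le_const (μ := μ) (C := ‖g‖)
        (Eventually.of_forall fun x => g.norm_coe_le_norm x)
      simpa using h)

lemma intCLM_apply (μ : Measure (AddCircle (1:ℝ))) [IsProbabilityMeasure μ]
    (g : C(AddCircle (1:ℝ), ℂ)) : intCLM μ g = ∫ x, g x ∂μ := rfl

/-- If integrals against all Fourier monomials agree, two probability measures agree. -/
lemma ext_of_fourier (μ ν : Measure (AddCircle (1:ℝ))) [IsProbabilityMeasure μ]
    [IsProbabilityMeasure ν]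
    (h : ∀ n : ℤ, ∫ x, (fourier n x : ℂ) ∂μ = ∫ x, (fourier n x : ℂ) ∂ν) :
    μ = ν := by
  have hall : ∀ g : C(AddCircle (1:ℝ), ℂ), ∫ x, g x ∂μ = ∫ x, g x ∂ν := by
    have hker : Submodule.span ℂ (Set.range (fourier (T := (1:ℝ))))
        ≤ (intCLM μ - intCLM ν).ker := by
      rw [Submodule.span_le]
      rintro g ⟨n, rfl⟩
      simp only [SetLike.mem_coe, LinearMap.mem_ker, ContinuousLinearMap.coe_coe,
        ContinuousLinearMap.coe_sub', Pi.sub_apply]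
      rw [intCLM_apply, intCLM_apply, sub_eq_zero]
      exact h n
    have htop := Submodule.topologicalClosure_minimal _ hker
      (ContinuousLinearMap.isClosed_ker _)
    rw [span_fourier_closure_eq_top] at htop
    intro g
    have hg : g ∈ (intCLM μ - intCLM ν).ker := htop Submodule.mem_top
    simp only [LinearMap.mem_ker, ContinuousLinearMap.coe_coe, ContinuousLinearMap.coe_sub', Pi.sub_apply] at hg
    rw [intCLM_apply, intCLM_apply, sub_eq_zero] at hg
    exact hg
  apply ext_of_forall_lintegral_eq_of_IsFiniteMeasure
  intro f
  have hcontR : Continuous (fun x : AddCircle (1:ℝ) => ((f x : ℝ))) :=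
    NNReal.continuous_coe.comp f.continuous
  have hr : ∫ x, ((f x : ℝ)) ∂μ = ∫ x, ((f x : ℝ)) ∂ν := by
    have hg := hall ⟨fun x => (((f x : ℝ)) : ℂ), Complex.continuous_ofReal.comp hcontR⟩
    simp only [ContinuousMap.coe_mk] at hg
    have e1 : ∫ x, (((f x : ℝ)) : ℂ) ∂μ = ((∫ x, ((f x : ℝ)) ∂μ : ℝ) : ℂ) := integral_ofReal
    have e2 : ∫ x, (((f x : ℝ)) : ℂ) ∂ν = ((∫ x, ((f x : ℝ)) ∂ν : ℝ) : ℂ) := integral_ofReal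
    rw [e1, e2] at hg
    exact_mod_cast hg
  have hint1 : Integrable (fun x : AddCircle (1:ℝ) => ((f x : ℝ))) μ :=
    hcontR.integrable_of_hasCompactSupport (HasCompactSupport.of_compactSpace _)
  have hint2 : Integrable (fun x : AddCircle (1:ℝ) => ((f x : ℝ))) ν :=
    hcontR.integrable_of_hasCompactSupport (HasCompactSupport.of_compactSpace _)
  rw [lintegral_coe_eq_integral _ hint1, lintegral_coe_eq_integral _ hint2, hr]

end Stmt15Aux

open Stmt15Aux AddCircle Complex

theorem stmt15 (S : Set ℕ) (hS : ∀ a ∈ S, ∀ b ∈ S, a * b ∈ S)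
    (hdens : 0 < atTop.liminf (fun N : ℕ => ((S ∩ Set.Icc 1 N).ncard : ℝ) / (N : ℝ)))
    (μ : Measure (AddCircle (1:ℝ))) [IsProbabilityMeasure μ]
    (hinv : ∀ n ∈ S, ∀ A : Set (AddCircle (1:ℝ)), MeasurableSet A →
      μ ((fun x : AddCircle (1:ℝ) => n • x) ⁻¹' A) = μ A)
    (herg : ∀ A : Set (AddCircle (1:ℝ)), MeasurableSet A →
      (∀ n ∈ S, (fun x : AddCircle (1:ℝ) => n • x) ⁻¹' A = A) → μ A = 0 ∨ μ A = 1)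
    (hatomless : ∀ x : AddCircle (1:ℝ), μ {x} = 0) :
    μ = volume := by
  classical
  set A : ℕ → ℝ := fun M => (∑ k ∈ Finset.Icc (-(M:ℤ)) (M:ℤ), ‖mc μ k‖^2) / (2*M+1) with hA
  have hW : Tendsto A atTop (nhds 0) := wiener μ hatomless
  -- Step 1: all nonzero Fourier coefficients vanish
  have hzero : ∀ m : ℤ, m ≠ 0 → mc μ m = 0 := by
    intro m hm
    by_contra hc
    set ε := ‖mc μ m‖^2 with hε
    have hεpos : 0 < ε := by
      rw [hε]
      have := norm_pos_iff.mpr hc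
      positivity
    set a := m.natAbs with ha
    have ha1 : 1 ≤ a := Int.natAbs_pos.mpr hm
    set d := atTop.liminf (fun N : ℕ => ((S ∩ Set.Icc 1 N).ncard : ℝ) / (N : ℝ)) with hd
    have hbdd : IsBoundedUnder (· ≥ ·) atTop
        (fun N : ℕ => ((S ∩ Set.Icc 1 N).ncard : ℝ) / (N : ℝ)) :=
      isBoundedUnder_of ⟨0, fun N => by positivity⟩
    have hev1 : ∀ᶠ N : ℕ in atTop, d/2 < ((S ∩ Set.Icc 1 N).ncard : ℝ) / N :=
      eventually_lt_of_lt_liminf (by linarith [hdens]) hbdd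
    -- key counting inequality
    have hkey : ∀ N : ℕ, ((S ∩ Set.Icc 1 N).ncard : ℝ) * ε
        ≤ ∑ k ∈ Finset.Icc (-((a*N:ℕ):ℤ)) ((a*N:ℕ):ℤ), ‖mc μ k‖^2 := by
      intro N
      have hfin : (S ∩ Set.Icc 1 N).Finite :=
        Set.Finite.inter_of_right (Set.finite_Icc 1 N) S
      rw [Set.ncard_eq_toFinset_card _ hfin]
      set t := hfin.toFinset with ht
      have hmc : ∀ n ∈ t, ‖mc μ (m * (n:ℤ))‖^2 = ε := by
        intro n hn
        rw [Set.Finite.mem_toFinset] at hn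
        rw [mc_mul μ n (hinv n hn.1) m]
      have hinj : ∀ x ∈ t, ∀ y ∈ t, (fun n : ℕ => m * (n:ℤ)) x = (fun n : ℕ => m * (n:ℤ)) y
          → x = y := by
        intro x _ y _ hxy
        have : (x:ℤ) = y := mul_left_cancel₀ hm hxy
        exact_mod_cast this
      have hsub : t.image (fun n : ℕ => m * (n:ℤ))
          ⊆ Finset.Icc (-((a*N:ℕ):ℤ)) ((a*N:ℕ):ℤ) := by
        intro k hk
        simp only [Finset.mem_image] at hk
        obtain ⟨n, hn, rfl⟩ := hk
        rw [Set.Finite.mem_toFinset] at hn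
        obtain ⟨-, h1, h2⟩ := hn
        have hn1 : (1:ℤ) ≤ n := by exact_mod_cast h1
        have hn2 : (n:ℤ) ≤ N := by exact_mod_cast h2
        have hma : |m| = (a:ℤ) := Int.abs_eq_natAbs m
        have habs : |m * (n:ℤ)| = (a:ℤ) * n := by
          rw [abs_mul, hma]
          congr 1
          exact abs_of_nonneg (by linarith)
        have hle : |m * (n:ℤ)| ≤ ((a*N:ℕ):ℤ) := by
          rw [habs]
          push_cast
          have h0a : (0:ℤ) ≤ a := by positivity
          nlinarith
        have h4 := abs_le.mp hle
        simp only [Finset.mem_Icc]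
        exact ⟨h4.1, h4.2⟩
      calc (t.card : ℝ) * ε = ∑ n ∈ t, ‖mc μ (m * (n:ℤ))‖^2 := by
            rw [Finset.sum_congr rfl hmc, Finset.sum_const, nsmul_eq_mul]
        _ = ∑ k ∈ t.image (fun n : ℕ => m * (n:ℤ)), ‖mc μ k‖^2 :=
            (Finset.sum_image (f := fun k : ℤ => ‖mc μ k‖^2) hinj).symm
        _ ≤ ∑ k ∈ Finset.Icc (-((a*N:ℕ):ℤ)) ((a*N:ℕ):ℤ), ‖mc μ k‖^2 :=
            Finset.sum_le_sum_of_subset_of_nonneg hsub (fun k _ _ => by positivity)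
    have hamul : Tendsto (fun N : ℕ => a * N) atTop atTop :=
      tendsto_atTop_atTop_of_monotone (fun _ _ h => Nat.mul_le_mul_left a h)
        (fun b => ⟨b, Nat.le_mul_of_pos_left b ha1⟩)
    have hAto : Tendsto (fun N : ℕ => A (a*N)) atTop (nhds 0) := hW.comp hamul
    have hev2 : ∀ᶠ N : ℕ in atTop, A (a*N) < d*ε/(8*a) :=
      hAto.eventually (gt_mem_nhds (by positivity))
    obtain ⟨N, h1, h2, hN1⟩ := (hev1.and (hev2.and (eventually_ge_atTop 1))).exists
    have hNpos : (0:ℝ) < N := by exact_mod_cast hN1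
    have hc1 : d/2 * N < ((S ∩ Set.Icc 1 N).ncard : ℝ) :=
      (lt_div_iff₀ hNpos).mp h1
    have hsum : ∑ k ∈ Finset.Icc (-((a*N:ℕ):ℤ)) ((a*N:ℕ):ℤ), ‖mc μ k‖^2
        = A (a*N) * (2*((a*N:ℕ):ℝ)+1) := by
      rw [hA]
      field_simp
    have hAnn : 0 ≤ A (a*N) := by
      rw [hA]
      apply div_nonneg (Finset.sum_nonneg fun k _ => by positivity) (by positivity)
    have hf2 : ((S ∩ Set.Icc 1 N).ncard : ℝ) * ε ≤ A (a*N) * (2*((a*N:ℕ):ℝ)+1) := by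
      rw [← hsum]; exact hkey N
    have hA2 := h2
    have haR : (1:ℝ) ≤ a := by exact_mod_cast ha1
    have hNR : (1:ℝ) ≤ N := by exact_mod_cast hN1
    have hd0 : 0 < d := hdens
    have hcast : ((a*N:ℕ):ℝ) = (a:ℝ)*(N:ℝ) := by push_cast; ring
    rw [hcast] at hf2
    have hub : A (a*N) * (2*((a:ℝ)*N)+1) ≤ A (a*N) * (3*((a:ℝ)*N)) := by
      apply mul_le_mul_of_nonneg_left _ hAnn
      nlinarith
    have hA3 : A (a*N) * (8*(a:ℝ)) < d*ε := by
      rw [lt_div_iff₀ (by positivity : (0:ℝ) < 8*(a:ℝ))] at hA2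
      exact hA2
    nlinarith [mul_lt_mul_of_pos_right hc1 hεpos, hf2, hub, hA3,
      mul_pos (mul_pos hd0 hεpos) hNpos, hAnn]
  -- Step 2: Fourier coefficients of μ and Haar measure agree
  have hhaar : ∀ n : ℤ, ∫ x, (fourier n x : ℂ) ∂μ
      = ∫ x, (fourier n x : ℂ) ∂(haarAddCircle : Measure (AddCircle (1:ℝ))) := by
    intro n
    by_cases hn : n = 0
    · subst hn
      have h1 : (fun x : AddCircle (1:ℝ) => (fourier 0 x : ℂ)) = fun _ => (1:ℂ) := by
        ext x; exact fourier_zero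
      rw [h1]
      simp
    · have hμ0 : ∫ x, (fourier n x : ℂ) ∂μ = 0 := by
        have h := hzero (-n) (neg_ne_zero.mpr hn)
        rw [mc_def, neg_neg] at h
        exact h
      have hh0 : ∫ x, (fourier n x : ℂ)
          ∂(haarAddCircle : Measure (AddCircle (1:ℝ))) = 0 := by
        exact integral_eq_zero_of_add_right_eq_neg
          (fourier_add_half_inv_index hn one_pos)
      rw [hμ0, hh0]
  have hvol : (volume : Measure (AddCircle (1:ℝ))) = haarAddCircle := by
    rw [volume_eq_smul_haarAddCircle]; simp
  rw [hvol]
  exact ext_of_fourier μ haarAddCircle hhaar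
end
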